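/- arXiv:2201.12788 — 3 statements merged into one kernel-verified Lean document; each statement's English description precedes it below -/
import Mathlib

section
/- Equality case of Picone's inequality: if v, w are positive C^1 functions on a connected open set Ω ⊆ ℝ^N and |∇v|^{p-2} ⟨∇v, ∇(w^p/v^{p-1})⟩ = |∇w|^p holds identically on Ω, then there exists k > 0 such that v = k·w on Ω. -/
open scoped RealInnerProductSpace

/-- Young's inequality with equality case. -/
lemma young_aux {p t s : ℝ} (hp : 1 < p) (ht : 0 < t) (hs : 0 ≤ s) :
    p * t ^ (p - 1) * s ≤ s ^ p + (p - 1) * t ^ p ∧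
      (p * t ^ (p - 1) * s = s ^ p + (p - 1) * t ^ p → s = t) := by
  have hσ : -1 ≤ s / t - 1 := by
    have : 0 ≤ s / t := div_nonneg hs ht.le
    linarith
  have htp : (0:ℝ) < t ^ p := Real.rpow_pos_of_pos ht p
  have hkey : ∀ (hb : 1 + p * (s / t - 1) ≤ (1 + (s / t - 1)) ^ p),
      p * t ^ (p - 1) * s ≤ s ^ p + (p - 1) * t ^ p := by
    intro hb
    have h1 : (1 + (s / t - 1)) = s / t := by ring
    rw [h1, Real.div_rpow hs ht.le] at hb
    have h2 : t ^ p * (1 + p * (s / t - 1)) ≤ t ^ p * (s ^ p / t ^ p) :=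
      mul_le_mul_of_nonneg_left hb htp.le
    rw [mul_div_cancel₀ _ htp.ne'] at h2
    have h3 : t ^ p * (s / t) = t ^ (p - 1) * s := by
      rw [show t ^ p = t ^ (p - 1) * t by
        rw [← Real.rpow_add_one ht.ne' (p-1)]; ring_nf]
      field_simp
    nlinarith [h3]
  constructor
  · exact hkey (one_add_mul_self_le_rpow_one_add hσ hp.le)
  · intro heq
    by_contra hne
    have hσ' : s / t - 1 ≠ 0 := by
      intro h
      apply hne
      have : s / t = 1 := by linarith
      field_simp at this; linarith
    have hb := one_add_mul_self_lt_rpow_one_add hσ hσ' hp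
    have h1 : (1 + (s / t - 1)) = s / t := by ring
    rw [h1, Real.div_rpow hs ht.le] at hb
    have h2 : t ^ p * (1 + p * (s / t - 1)) < t ^ p * (s ^ p / t ^ p) :=
      mul_lt_mul_of_pos_left hb htp
    rw [mul_div_cancel₀ _ htp.ne'] at h2
    have h3 : t ^ p * (s / t) = t ^ (p - 1) * s := by
      rw [show t ^ p = t ^ (p - 1) * t by
        rw [← Real.rpow_add_one ht.ne' (p-1)]; ring_nf]
      field_simp
    nlinarith [h3]

lemma picone_pointwise {F : Type*} [NormedAddCommGroup F] [InnerProductSpace ℝ F]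
    {p V W : ℝ} (hp : 1 < p) (hV : 0 < V) (hW : 0 < W) {a b : F}
    (h : ‖a‖ ^ (p - 2) * (W ^ p * ((1 - p) * V ^ (1 - p - 1)) * ⟪a, a⟫ +
        V ^ (1 - p) * (p * W ^ (p - 1)) * ⟪b, a⟫) = ‖b‖ ^ p) :
    V • b = W • a := by
  have hp0 : (0:ℝ) < p := by linarith
  rcases eq_or_ne a 0 with rfl | ha
  · simp only [inner_zero_right, mul_zero, zero_add, zero_mul, mul_zero, add_zero] at h
    have hb0 : ‖b‖ = 0 := by
      have := h.symm
      rw [Real.rpow_eq_zero_iff_of_nonneg (norm_nonneg b)] at this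
      exact this.1
    have hb : b = 0 := by simpa using hb0
    simp [hb]
  · have hna : (0:ℝ) < ‖a‖ := norm_pos_iff.mpr ha
    set r : ℝ := W / V with hr
    have hrpos : 0 < r := div_pos hW hV
    set t : ℝ := r * ‖a‖ with htdef
    have htpos : 0 < t := mul_pos hrpos hna
    set s : ℝ := ‖b‖ with hsdef
    have hs0 : 0 ≤ s := norm_nonneg b
    have e1 : W ^ p * V ^ (1 - p - 1) = r ^ p := by
      rw [show (1 - p - 1 : ℝ) = -p by ring, Real.rpow_neg hV.le, hr,
        Real.div_rpow hW.le hV.le, div_eq_mul_inv]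
    have e2 : V ^ (1 - p) * W ^ (p - 1) = r ^ (p - 1) := by
      rw [show (1 - p : ℝ) = -(p - 1) by ring, Real.rpow_neg hV.le, hr,
        Real.div_rpow hW.le hV.le, div_eq_mul_inv]
      ring
    have einner : ⟪a, a⟫ = ‖a‖ ^ 2 := real_inner_self_eq_norm_sq a
    have enorm : ‖a‖ ^ (p - 2) * ‖a‖ ^ 2 = ‖a‖ ^ p := by
      rw [← Real.rpow_natCast ‖a‖ 2, ← Real.rpow_add hna]; norm_num
    have enorm1 : ‖a‖ ^ (p - 2) * ‖a‖ = ‖a‖ ^ (p - 1) := by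
      nth_rewrite 2 [show ‖a‖ = ‖a‖ ^ (1:ℝ) from (Real.rpow_one _).symm]
      rw [← Real.rpow_add hna]; ring_nf
    have etp : t ^ p = r ^ p * ‖a‖ ^ p := Real.mul_rpow hrpos.le hna.le
    have etp1 : t ^ (p - 1) = r ^ (p - 1) * ‖a‖ ^ (p - 1) := Real.mul_rpow hrpos.le hna.le
    have hE : s ^ p + (p - 1) * t ^ p =
        p * r ^ (p - 1) * (‖a‖ ^ (p - 2) * ⟪b, a⟫) := by
      rw [einner] at h
      linear_combination (-1 : ℝ) * h + ((1 - p) * (‖a‖ ^ (p - 2) * ‖a‖ ^ 2)) * e1 +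
        (p * ‖a‖ ^ (p - 2) * ⟪b, a⟫) * e2 + ((p - 1)) * etp + ((1 - p) * r ^ p) * enorm
    have hX : (0:ℝ) < ‖a‖ ^ (p - 2) := Real.rpow_pos_of_pos hna _
    have hC : (0:ℝ) < p * r ^ (p - 1) := mul_pos hp0 (Real.rpow_pos_of_pos hrpos _)
    have hCS : ⟪b, a⟫ ≤ ‖b‖ * ‖a‖ := real_inner_le_norm b a
    have h4 : s ^ p + (p - 1) * t ^ p ≤ p * t ^ (p - 1) * s := by
      calc s ^ p + (p - 1) * t ^ p = p * r ^ (p - 1) * (‖a‖ ^ (p - 2) * ⟪b, a⟫) := hE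
        _ ≤ p * r ^ (p - 1) * (‖a‖ ^ (p - 2) * (‖b‖ * ‖a‖)) := by
            apply mul_le_mul_of_nonneg_left _ hC.le
            exact mul_le_mul_of_nonneg_left hCS hX.le
        _ = p * t ^ (p - 1) * s := by
            rw [etp1, ← enorm1]; ring
    obtain ⟨hy, hyeq⟩ := young_aux hp htpos hs0
    have heqy : p * t ^ (p - 1) * s = s ^ p + (p - 1) * t ^ p := le_antisymm hy h4
    have hst : s = t := hyeq heqy
    have hinner : ⟪b, a⟫ = ‖b‖ * ‖a‖ := by
      have h6 : (p * r ^ (p - 1) * ‖a‖ ^ (p - 2)) * ⟪b, a⟫ =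
          (p * r ^ (p - 1) * ‖a‖ ^ (p - 2)) * (‖b‖ * ‖a‖) := by
        have h7 : p * t ^ (p - 1) * s = p * r ^ (p - 1) * (‖a‖ ^ (p - 2) * (s * ‖a‖)) := by
          rw [etp1, ← enorm1]; ring
        linear_combination -hE - heqy + h7
      exact mul_left_cancel₀ (by positivity) h6
    have hsmul : ‖a‖ • b = ‖b‖ • a := inner_eq_norm_mul_iff_real.mp hinner
    have hb : b = r • a := by
      have : ‖a‖ • b = ‖a‖ • (r • a) := by
        rw [hsmul, ← hsdef, hst, htdef, smul_smul, mul_comm]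
      exact smul_right_injective F hna.ne' this
    rw [hb, smul_smul, hr]
    congr 1
    field_simp

lemma const_on_connected_open {E : Type*} [NormedAddCommGroup E] [NormedSpace ℝ E]
    {f : E → ℝ} {Ω : Set E} (hΩ : IsOpen Ω) (hc : IsPreconnected Ω)
    (hf : ∀ x ∈ Ω, HasFDerivAt f (0 : E →L[ℝ] ℝ) x) :
    ∀ x ∈ Ω, ∀ y ∈ Ω, f x = f y := by
  have hloc : ∀ z ∈ Ω, ∃ ε > 0, Metric.ball z ε ⊆ Ω ∧ ∀ u ∈ Metric.ball z ε, f u = f z := by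
    intro z hz
    obtain ⟨ε, hε, hball⟩ := Metric.isOpen_iff.mp hΩ z hz
    refine ⟨ε, hε, hball, fun u hu => ?_⟩
    refine (convex_ball z ε).is_const_of_fderivWithin_eq_zero
      (fun u hu => (hf u (hball hu)).differentiableAt.differentiableWithinAt)
      (fun u hu => ?_) hu (Metric.mem_ball_self hε)
    exact ((hf u (hball hu)).hasFDerivWithinAt).fderivWithin
      (Metric.isOpen_ball.uniqueDiffWithinAt hu)
  intro x hx y hy
  by_contra hne
  set U : Set E := {z | z ∈ Ω ∧ f z = f x} with hU
  set V : Set E := {z | z ∈ Ω ∧ f z ≠ f x} with hV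
  have hUopen : IsOpen U := by
    rw [isOpen_iff_mem_nhds]
    rintro z ⟨hz, hfz⟩
    obtain ⟨ε, hε, hball, hconst⟩ := hloc z hz
    refine Filter.mem_of_superset (Metric.ball_mem_nhds z hε) ?_
    intro u hu
    exact ⟨hball hu, by rw [hconst u hu, hfz]⟩
  have hVopen : IsOpen V := by
    rw [isOpen_iff_mem_nhds]
    rintro z ⟨hz, hfz⟩
    obtain ⟨ε, hε, hball, hconst⟩ := hloc z hz
    refine Filter.mem_of_superset (Metric.ball_mem_nhds z hε) ?_
    intro u hu
    exact ⟨hball hu, by rw [hconst u hu]; exact hfz⟩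
  have hsub : Ω ⊆ U ∪ V := fun z hz => by
    by_cases h : f z = f x
    · exact Or.inl ⟨hz, h⟩
    · exact Or.inr ⟨hz, h⟩
  obtain ⟨z, hzΩ, hzU, hzV⟩ := hc U V hUopen hVopen hsub ⟨x, hx, hx, rfl⟩
    ⟨y, hy, hy, fun h => hne h.symm⟩
  exact hzV.2 hzU.2

/-- Equality case of Picone's inequality: if `v, w` are positive C¹ functions on a
connected open set `Ω ⊆ ℝ^N` and `|∇v|^(p-2) ⟨∇v, ∇(w^p/v^(p-1))⟩ = |∇w|^p` holds
identically on `Ω`, then there is `k > 0` with `v = k · w` on `Ω`. -/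
theorem picone_equality_case {N : ℕ}
    (Ω : Set (EuclideanSpace ℝ (Fin N))) (hΩ : IsOpen Ω) (hΩc : IsConnected Ω)
    (p : ℝ) (hp : 1 < p)
    (v w : EuclideanSpace ℝ (Fin N) → ℝ)
    (hv : ContDiffOn ℝ 1 v Ω) (hw : ContDiffOn ℝ 1 w Ω)
    (hvpos : ∀ x ∈ Ω, 0 < v x) (hwpos : ∀ x ∈ Ω, 0 < w x)
    (gv gw gq : EuclideanSpace ℝ (Fin N) → EuclideanSpace ℝ (Fin N))
    (hgv : ∀ x ∈ Ω, HasGradientAt v (gv x) x)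
    (hgw : ∀ x ∈ Ω, HasGradientAt w (gw x) x)
    (hgq : ∀ x ∈ Ω, HasGradientAt (fun y => w y ^ p / v y ^ (p - 1)) (gq x) x)
    (heq : ∀ x ∈ Ω, ‖gv x‖ ^ (p - 2) * ⟪gv x, gq x⟫ = ‖gw x‖ ^ p) :
    ∃ k : ℝ, 0 < k ∧ ∀ x ∈ Ω, v x = k * w x := by
  -- Step 1: pointwise proportionality of gradients
  have hpt : ∀ x ∈ Ω, v x • gw x = w x • gv x := by
    intro x hx
    have hVpos := hvpos x hx
    have hWpos := hwpos x hx
    have hva : HasFDerivAt v (InnerProductSpace.toDual ℝ _ (gv x)) x := (hgv x hx).hasFDerivAt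
    have hwa : HasFDerivAt w (InnerProductSpace.toDual ℝ _ (gw x)) x := (hgw x hx).hasFDerivAt
    have hwp : HasFDerivAt (fun y => w y ^ p)
        ((p * w x ^ (p - 1)) • InnerProductSpace.toDual ℝ _ (gw x)) x :=
      hwa.rpow_const (Or.inl hWpos.ne')
    have hvp : HasFDerivAt (fun y => v y ^ (1 - p))
        (((1 - p) * v x ^ (1 - p - 1)) • InnerProductSpace.toDual ℝ _ (gv x)) x :=
      hva.rpow_const (Or.inl hVpos.ne')
    have hG : HasFDerivAt (fun y => w y ^ p * v y ^ (1 - p))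
        (w x ^ p • (((1 - p) * v x ^ (1 - p - 1)) • InnerProductSpace.toDual ℝ _ (gv x)) +
          v x ^ (1 - p) • ((p * w x ^ (p - 1)) • InnerProductSpace.toDual ℝ _ (gw x))) x :=
      hwp.mul hvp
    have hQ : (fun y => w y ^ p / v y ^ (p - 1)) =ᶠ[nhds x] (fun y => w y ^ p * v y ^ (1 - p)) := by
      filter_upwards [hΩ.mem_nhds hx] with y hy
      rw [div_eq_mul_inv, ← Real.rpow_neg (hvpos y hy).le, neg_sub]
    have hF : HasFDerivAt (fun y => w y ^ p / v y ^ (p - 1))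
        (w x ^ p • (((1 - p) * v x ^ (1 - p - 1)) • InnerProductSpace.toDual ℝ _ (gv x)) +
          v x ^ (1 - p) • ((p * w x ^ (p - 1)) • InnerProductSpace.toDual ℝ _ (gw x))) x :=
      hG.congr_of_eventuallyEq hQ
    have hDq := (hgq x hx).hasFDerivAt.unique hF
    have h' : ⟪gv x, gq x⟫ =
        w x ^ p * ((1 - p) * v x ^ (1 - p - 1)) * ⟪gv x, gv x⟫ +
          v x ^ (1 - p) * (p * w x ^ (p - 1)) * ⟪gw x, gv x⟫ := by
      have := congrFun (congrArg DFunLike.coe hDq) (gv x)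
      simp only [ContinuousLinearMap.add_apply, ContinuousLinearMap.coe_smul',
        Pi.smul_apply, InnerProductSpace.toDual_apply_apply, smul_eq_mul] at this
      rw [real_inner_comm]
      rw [this]; ring
    have h : ‖gv x‖ ^ (p - 2) * (w x ^ p * ((1 - p) * v x ^ (1 - p - 1)) * ⟪gv x, gv x⟫ +
        v x ^ (1 - p) * (p * w x ^ (p - 1)) * ⟪gw x, gv x⟫) = ‖gw x‖ ^ p := by
      rw [← h']; exact heq x hx
    exact picone_pointwise hp hVpos hWpos h
  -- Step 2: v / w has zero derivative on Ω
  have hder : ∀ x ∈ Ω, HasFDerivAt (fun y => v y / w y)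
      (0 : EuclideanSpace ℝ (Fin N) →L[ℝ] ℝ) x := by
    intro x hx
    have hWpos := hwpos x hx
    have hva : HasFDerivAt v (InnerProductSpace.toDual ℝ _ (gv x)) x := (hgv x hx).hasFDerivAt
    have hwa : HasFDerivAt w (InnerProductSpace.toDual ℝ _ (gw x)) x := (hgw x hx).hasFDerivAt
    have hinv : HasFDerivAt (fun y => (w y)⁻¹)
        ((-(w x ^ 2)⁻¹) • InnerProductSpace.toDual ℝ _ (gw x)) x :=
      (hasDerivAt_inv hWpos.ne').comp_hasFDerivAt x hwa
    have hmul : HasFDerivAt (fun y => v y * (w y)⁻¹)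
        (v x • ((-(w x ^ 2)⁻¹) • InnerProductSpace.toDual ℝ _ (gw x)) +
          (w x)⁻¹ • InnerProductSpace.toDual ℝ _ (gv x)) x := hva.mul hinv
    have hba : gw x = ((v x)⁻¹ * w x) • gv x := by
      have h1 := congrArg (fun u => (v x)⁻¹ • u) (hpt x hx)
      simp only [smul_smul] at h1
      rwa [inv_mul_cancel₀ (hvpos x hx).ne', one_smul] at h1
    have hzero : v x • ((-(w x ^ 2)⁻¹) • InnerProductSpace.toDual ℝ _ (gw x)) +
        (w x)⁻¹ • InnerProductSpace.toDual ℝ _ (gv x) = 0 := by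
      rw [hba, map_smul, smul_smul, smul_smul, ← add_smul]
      have hco : v x * (-(w x ^ 2)⁻¹) * ((v x)⁻¹ * w x) + (w x)⁻¹ = 0 := by
        have hv0 : v x ≠ 0 := (hvpos x hx).ne'
        have hw0 : w x ≠ 0 := hWpos.ne'
        field_simp
        ring
      rw [hco, zero_smul]
    have : (fun y => v y / w y) = (fun y => v y * (w y)⁻¹) := by
      funext y; rw [div_eq_mul_inv]
    rw [this]
    rw [← hzero]
    exact hmul
  -- Step 3: conclude via connectedness
  obtain ⟨x₀, hx₀⟩ := hΩc.nonempty
  refine ⟨v x₀ / w x₀, div_pos (hvpos x₀ hx₀) (hwpos x₀ hx₀), fun x hx => ?_⟩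
  have := const_on_connected_open hΩ hΩc.isPreconnected hder x hx x₀ hx₀
  have hwx := (hwpos x hx).ne'
  field_simp at this ⊢
  linarith [this]
end

section
/- Folding lemma: let K ⊆ ℝ^N be a compact convex set and ω ∈ S^{N-1} such that the section π_{λ,ω} ∩ K equals the orthogonal projection of K onto the hyperplane π_{λ,ω} = {x : ⟨x,ω⟩ = λ}. Then max{F_K(ω), F_K(−ω)} ≥ (1/4)·B_K(ω), where F_K(ν) is the maximal folding height of K in direction ν and B_K(ω) is the breadth. -/
open scoped RealInnerProductSpace

/-- The support function `H_K(ω) = sup {⟨x, ω⟩ : x ∈ K}`. -/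
noncomputable def suppFn {N : ℕ} (K : Set (EuclideanSpace ℝ (Fin N)))
    (ω : EuclideanSpace ℝ (Fin N)) : ℝ :=
  sSup ((fun x => ⟪x, ω⟫) '' K)

/-- The breadth `B_K(ω) = H_K(ω) + H_K(-ω)`. -/
noncomputable def breadthFn {N : ℕ} (K : Set (EuclideanSpace ℝ (Fin N)))
    (ω : EuclideanSpace ℝ (Fin N)) : ℝ :=
  suppFn K ω + suppFn K (-ω)

/-- The cap `K_{μ,ω} = {x ∈ K : ⟨x,ω⟩ ≥ μ}`. -/
noncomputable def capSet {N : ℕ} (K : Set (EuclideanSpace ℝ (Fin N)))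
    (ω : EuclideanSpace ℝ (Fin N)) (μ : ℝ) : Set (EuclideanSpace ℝ (Fin N)) :=
  {x ∈ K | μ ≤ ⟪x, ω⟫}

/-- The reflection `T_{μ,ω}(x) = x - 2ω(⟨ω,x⟩ - μ)`. -/
noncomputable def reflMap {N : ℕ} (ω : EuclideanSpace ℝ (Fin N)) (μ : ℝ)
    (x : EuclideanSpace ℝ (Fin N)) : EuclideanSpace ℝ (Fin N) :=
  x - (2 * (⟪ω, x⟫ - μ)) • ω

/-- The maximal folding cap `K_ω = ∪ {K_{μ,ω} : T_{μ,ω}(K_{μ,ω}) ⊆ K}`. -/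
noncomputable def maxFoldCap {N : ℕ} (K : Set (EuclideanSpace ℝ (Fin N)))
    (ω : EuclideanSpace ℝ (Fin N)) : Set (EuclideanSpace ℝ (Fin N)) :=
  ⋃ μ ∈ {μ : ℝ | reflMap ω μ '' capSet K ω μ ⊆ K}, capSet K ω μ

/-- The maximal folding height `F_K(ω) = B_{K_ω}(ω)`. -/
noncomputable def foldHeight {N : ℕ} (K : Set (EuclideanSpace ℝ (Fin N)))
    (ω : EuclideanSpace ℝ (Fin N)) : ℝ :=
  breadthFn (maxFoldCap K ω) ω

/-- The orthogonal projection onto the hyperplane `⟨x,ω⟩ = λ` (for `‖ω‖ = 1`). -/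
noncomputable def projMap {N : ℕ} (ω : EuclideanSpace ℝ (Fin N)) (lam : ℝ)
    (x : EuclideanSpace ℝ (Fin N)) : EuclideanSpace ℝ (Fin N) :=
  x - (⟪x, ω⟫ - lam) • ω

lemma fold_aux {N : ℕ}
    (K : Set (EuclideanSpace ℝ (Fin N))) (hK : IsCompact K) (hconv : Convex ℝ K)
    (hne : K.Nonempty)
    (ω : EuclideanSpace ℝ (Fin N)) (hω : ‖ω‖ = 1) (lam : ℝ)
    (hshadow : {x : EuclideanSpace ℝ (Fin N) | ⟪x, ω⟫ = lam} ∩ K = projMap ω lam '' K) :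
    foldHeight K ω ≥ (suppFn K ω - lam) / 2 := by
  have hcont : Continuous fun x : EuclideanSpace ℝ (Fin N) => ⟪x, ω⟫ :=
    continuous_id.inner continuous_const
  -- boundedness
  have hbddK : BddAbove ((fun x => ⟪x, ω⟫) '' K) :=
    (hK.image hcont).bddAbove
  have hbddKneg : BddAbove ((fun x => ⟪x, -ω⟫) '' K) :=
    (hK.image (continuous_id.inner continuous_const)).bddAbove
  -- the maximum point
  obtain ⟨xs, hxsK, hxsmax⟩ := hK.exists_isMaxOn hne hcont.continuousOn
  set H : ℝ := suppFn K ω with hHdef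
  have hH : H = ⟪xs, ω⟫ := by
    apply IsGreatest.csSup_eq
    exact ⟨⟨xs, hxsK, rfl⟩, by rintro _ ⟨z, hz, rfl⟩; exact hxsmax hz⟩
  -- a point in the section
  obtain ⟨x0, hx0⟩ := hne
  have hproj : ∀ x ∈ K, projMap ω lam x ∈ {x : EuclideanSpace ℝ (Fin N) | ⟪x, ω⟫ = lam} ∩ K := by
    intro x hx
    rw [hshadow]; exact ⟨x, hx, rfl⟩
  obtain ⟨hy1, hy2⟩ := hproj x0 hx0
  set y : EuclideanSpace ℝ (Fin N) := projMap ω lam x0 with hydef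
  have hylam : ⟪y, ω⟫ = lam := hy1
  have hlamH : lam ≤ H := by
    rw [hH, ← hylam]
    exact hxsmax hy2
  set μ : ℝ := (lam + H) / 2 with hμdef
  have hμH : μ ≤ H := by rw [hμdef]; linarith
  have hlamμ : lam ≤ μ := by rw [hμdef]; linarith
  have hnormsq : ⟪ω, ω⟫ = (1:ℝ) := by
    rw [real_inner_self_eq_norm_sq, hω]; norm_num
  -- folding property at μ
  have hfold : reflMap ω μ '' capSet K ω μ ⊆ K := by
    rintro _ ⟨x, ⟨hxK, hxμ⟩, rfl⟩
    set t : ℝ := ⟪x, ω⟫ with htdef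
    have htH : t ≤ H := by rw [hH]; exact hxsmax hxK
    have hpx := hproj x hxK
    set p : EuclideanSpace ℝ (Fin N) := projMap ω lam x with hpdef
    set s : ℝ := 2 * (t - μ) / (t - lam) with hsdef
    have hlamt : lam ≤ t := le_trans hlamμ hxμ
    have hs0 : 0 ≤ s := by
      apply div_nonneg <;> linarith
    have hs1 : s ≤ 1 := by
      rcases eq_or_lt_of_le hlamt with h | h
      · have : t - lam = 0 := by linarith
        rw [hsdef, this, div_zero]; norm_num
      · rw [hsdef, div_le_one (by linarith)]
        rw [hμdef]; linarith
    have hsc : s * (t - lam) = 2 * (t - μ) := by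
      rcases eq_or_lt_of_le hlamt with h | h
      · have h1 : t - lam = 0 := by linarith
        have h2 : t = μ := by rw [hμdef]; linarith
        rw [hsdef, h1, mul_zero, h2]; ring
      · rw [hsdef, div_mul_cancel₀]; linarith
    have hkey : reflMap ω μ x = (1 - s) • x + s • p := by
      rw [hpdef]
      show x - (2 * (⟪ω, x⟫ - μ)) • ω = (1 - s) • x + s • (x - (⟪x, ω⟫ - lam) • ω)
      have hc : (⟪ω, x⟫ : ℝ) = t := by rw [real_inner_comm]
      rw [hc, ← htdef, smul_sub, smul_smul, hsc, sub_smul, one_smul]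
      abel
    rw [hkey]
    exact hconv hxK hpx.2 (by linarith) hs0 (by ring)
  have hcapsub : capSet K ω μ ⊆ maxFoldCap K ω := by
    intro x hx
    exact Set.mem_biUnion hfold hx
  have hMsubK : maxFoldCap K ω ⊆ K := by
    apply Set.iUnion₂_subset
    intro μ' _ x hx
    exact hx.1
  -- xs is in the cap
  have hxs_cap : xs ∈ capSet K ω μ := ⟨hxsK, by rw [← hH]; exact hμH⟩
  -- the point z at level μ
  set t0 : ℝ := (μ - lam) / (H - lam) with ht0def
  have ht00 : 0 ≤ t0 := by apply div_nonneg <;> linarith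
  have ht01 : t0 ≤ 1 := by
    rcases eq_or_lt_of_le hlamH with h | h
    · rw [ht0def, ← h]; simp
    · rw [ht0def, div_le_one (by linarith)]; linarith
  have ht0sc : t0 * (H - lam) = μ - lam := by
    rcases eq_or_lt_of_le hlamH with h | h
    · have h1 : H - lam = 0 := by linarith
      have h2 : μ = lam := by rw [hμdef]; linarith
      rw [h1, mul_zero, h2]; ring
    · rw [ht0def, div_mul_cancel₀]; linarith
  set z : EuclideanSpace ℝ (Fin N) := (1 - t0) • y + t0 • xs with hzdef
  have hzK : z ∈ K := hconv hy2 hxsK (by linarith) ht00 (by ring)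
  have hzinner : ⟪z, ω⟫ = μ := by
    rw [hzdef]
    have : ⟪(1 - t0) • y + t0 • xs, ω⟫ = (1 - t0) * ⟪y, ω⟫ + t0 * ⟪xs, ω⟫ := by
      rw [inner_add_left, real_inner_smul_left, real_inner_smul_left]
    rw [this, hylam, ← hH]
    nlinarith [ht0sc]
  have hz_cap : z ∈ capSet K ω μ := ⟨hzK, le_of_eq hzinner.symm⟩
  -- breadth estimate
  have hbdd1 : BddAbove ((fun x => ⟪x, ω⟫) '' maxFoldCap K ω) :=
    hbddK.mono (Set.image_mono hMsubK)
  have hbdd2 : BddAbove ((fun x => ⟪x, -ω⟫) '' maxFoldCap K ω) :=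
    hbddKneg.mono (Set.image_mono hMsubK)
  have h1 : H ≤ suppFn (maxFoldCap K ω) ω := by
    rw [hH]
    exact le_csSup hbdd1 ⟨xs, hcapsub hxs_cap, rfl⟩
  have h2 : -μ ≤ suppFn (maxFoldCap K ω) (-ω) := by
    have : ⟪z, -ω⟫ = -μ := by rw [inner_neg_right, hzinner]
    rw [← this]
    exact le_csSup hbdd2 ⟨z, hcapsub hz_cap, rfl⟩
  have : foldHeight K ω = suppFn (maxFoldCap K ω) ω + suppFn (maxFoldCap K ω) (-ω) := rfl
  rw [this, ← hHdef, hμdef] at *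
  linarith


/-- Folding lemma: if the section `π_{λ,ω} ∩ K` equals the orthogonal projection
(shadow) of `K` onto the hyperplane `π_{λ,ω}`, then
`max {F_K(ω), F_K(-ω)} ≥ (1/4) B_K(ω)`. -/
theorem folding_lemma {N : ℕ}
    (K : Set (EuclideanSpace ℝ (Fin N))) (hK : IsCompact K) (hconv : Convex ℝ K)
    (ω : EuclideanSpace ℝ (Fin N)) (hω : ‖ω‖ = 1) (lam : ℝ)
    (hshadow : {x : EuclideanSpace ℝ (Fin N) | ⟪x, ω⟫ = lam} ∩ K = projMap ω lam '' K) :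
    max (foldHeight K ω) (foldHeight K (-ω)) ≥ (1 / 4) * breadthFn K ω := by

  rcases K.eq_empty_or_nonempty with hE | hne
  · subst hE
    simp [foldHeight, breadthFn, suppFn, maxFoldCap, capSet, Real.sSup_empty]
  · have h1 := fold_aux K hK hconv hne ω hω lam hshadow
    have hshadow' : {x : EuclideanSpace ℝ (Fin N) | ⟪x, -ω⟫ = -lam} ∩ K
        = projMap (-ω) (-lam) '' K := by
      have hset : {x : EuclideanSpace ℝ (Fin N) | ⟪x, -ω⟫ = -lam}
          = {x : EuclideanSpace ℝ (Fin N) | ⟪x, ω⟫ = lam} := by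
        ext x; simp [inner_neg_right, neg_eq_iff_eq_neg]
      have hfun : projMap (-ω) (-lam) = projMap ω lam := by
        funext x
        show x - (⟪x, -ω⟫ - -lam) • (-ω) = x - (⟪x, ω⟫ - lam) • ω
        rw [inner_neg_right, smul_neg, ← neg_smul]
        congr 2
        ring
      rw [hset, hfun]; exact hshadow
    have h2 := fold_aux K hK hconv hne (-ω) (by rwa [norm_neg]) (-lam) hshadow'
    have hmax : (foldHeight K ω + foldHeight K (-ω)) / 2
        ≤ max (foldHeight K ω) (foldHeight K (-ω)) := by
      rcases le_total (foldHeight K ω) (foldHeight K (-ω)) with h | h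
      · rw [max_eq_right h]; linarith
      · rw [max_eq_left h]; linarith
    have hB : breadthFn K ω = suppFn K ω + suppFn K (-ω) := rfl
    rw [ge_iff_le, hB]
    linarith
end

section
/- Suppose K ⊆ ℝ^N is a compact convex set, ω ∈ S^{N-1}, λ ∈ ℝ is such that π_{λ,ω} ∩ K is the orthogonal projection of K onto π_{λ,ω}, and λ ≤ (H_K(ω) − H_K(−ω))/2. Setting μ = H_K(ω) − (1/4)B_K(ω), we have μ ≥ λ + (1/4)B_K(ω) and the reflection across π_{μ,ω} maps the cap K_{μ,ω} = {x ∈ K : ⟨x,ω⟩ ≥ μ} into K. -/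
open scoped RealInnerProductSpace

/-- If `π_{λ,ω} ∩ K` is the shadow of `K` on `π_{λ,ω}` and
`λ ≤ (H_K(ω) - H_K(-ω))/2`, then with `μ = H_K(ω) - B_K(ω)/4` one has
`μ ≥ λ + B_K(ω)/4` and `T_{μ,ω}` maps the cap `K_{μ,ω}` into `K`. -/
theorem folding_quarter_cap {N : ℕ}
    (K : Set (EuclideanSpace ℝ (Fin N))) (hK : IsCompact K) (hconv : Convex ℝ K)
    (ω : EuclideanSpace ℝ (Fin N)) (hω : ‖ω‖ = 1) (lam : ℝ)
    (hshadow : {x : EuclideanSpace ℝ (Fin N) | ⟪x, ω⟫ = lam} ∩ K = projMap ω lam '' K)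
    (hlam : lam ≤ (suppFn K ω - suppFn K (-ω)) / 2) :
    lam + (1 / 4) * breadthFn K ω ≤ suppFn K ω - (1 / 4) * breadthFn K ω ∧
      reflMap ω (suppFn K ω - (1 / 4) * breadthFn K ω) ''
          capSet K ω (suppFn K ω - (1 / 4) * breadthFn K ω) ⊆ K := by
  classical
  have hB : breadthFn K ω = suppFn K ω + suppFn K (-ω) := rfl
  set H := suppFn K ω with hHdef
  set H' := suppFn K (-ω) with hH'def
  constructor
  · rw [hB]; linarith
  · rintro y ⟨x, ⟨hxK, hxs⟩, rfl⟩
    have hcont : Continuous fun z : EuclideanSpace ℝ (Fin N) => ⟪z, ω⟫ :=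
      continuous_id.inner continuous_const
    have hcont' : Continuous fun z : EuclideanSpace ℝ (Fin N) => ⟪z, -ω⟫ :=
      continuous_id.inner continuous_const
    have hbdd : BddAbove ((fun z : EuclideanSpace ℝ (Fin N) => ⟪z, ω⟫) '' K) :=
      (hK.image hcont).bddAbove
    have hbdd' : BddAbove ((fun z : EuclideanSpace ℝ (Fin N) => ⟪z, -ω⟫) '' K) :=
      (hK.image hcont').bddAbove
    have hxH : ⟪x, ω⟫ ≤ H := le_csSup hbdd ⟨x, hxK, rfl⟩
    have hxH' : ⟪x, -ω⟫ ≤ H' := le_csSup hbdd' ⟨x, hxK, rfl⟩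
    have hneg : ⟪x, -ω⟫ = -⟪x, ω⟫ := inner_neg_right x ω
    have hBnn : 0 ≤ H + H' := by rw [hneg] at hxH'; linarith
    set s := ⟪x, ω⟫ with hs
    set μ := H - 1 / 4 * breadthFn K ω with hμ
    have hμs : μ ≤ s := hxs
    have hμval : μ = H - (H + H') / 4 := by rw [hμ, hB]; ring
    have hωx : ⟪ω, x⟫ = s := by rw [hs]; exact (real_inner_comm ω x).symm
    clear_value s μ
    by_cases hcase : s = lam
    · -- then B = 0 and s = μ, so reflection is identity
      have hB0 : H + H' = 0 := by
        have : lam ≤ (H - H') / 2 := hlam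
        nlinarith [hμs, hμval, hxH]
      have hsμ : s = μ := by
        have : μ = H := by rw [hμval]; linarith
        linarith [hxH, hμs]
      have : reflMap ω μ x = x := by
        unfold reflMap
        rw [hωx, ← hsμ]
        simp
      rw [this]; exact hxK
    · have hlt : lam < s := by
        rcases lt_or_eq_of_le (by linarith [hμs, hμval] : lam ≤ s) with h | h
        · exact h
        · exact absurd h.symm hcase
      have hd : s - lam ≠ 0 := by linarith
      set t := 2 * (s - μ) / (s - lam) with ht
      have ht0 : 0 ≤ t := div_nonneg (by linarith) (by linarith)
      have ht1 : t ≤ 1 := by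
        rw [ht, div_le_one (by linarith)]
        have : lam ≤ (H - H') / 2 := hlam
        nlinarith [hxH, hμval]
      have htmul : t * (s - lam) = 2 * (s - μ) := by
        rw [ht]; field_simp
      clear_value t
      have hpK : projMap ω lam x ∈ K := by
        have hmem : projMap ω lam x ∈ projMap ω lam '' K := ⟨x, hxK, rfl⟩
        rw [← hshadow] at hmem
        exact hmem.2
      have key : reflMap ω μ x = (1 - t) • x + t • projMap ω lam x := by
        unfold reflMap projMap
        rw [hωx, ← hs]
        have h1 : (1 - t) • x + t • (x - (s - lam) • ω)
            = x - (t * (s - lam)) • ω := by module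
        rw [h1, htmul]
      rw [key]
      exact hconv hxK hpK (by linarith) ht0 (by ring)
end
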